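/- Define the polynomials K(p) = 4p + p² + p(p − 2) + (1/2)p²(p − 2) and L(p) = (1/2)p(p − 2) − p − 4. There is no nonempty open interval I ⊆ ℝ with L(p) ≠ 0 for all p ∈ I on which ((K/L)'(p))² = 1 holds identically; i.e., the derivative of K/L cannot be identically 1 or identically −1 on any nonempty open interval avoiding the zeros of L. -/

import Mathlib

open Polynomial

noncomputable def qpoly : Polynomial ℝ :=
  -C (9/2) * X ^ 6 + C 24 * X ^ 5 + C 165 * X ^ 4 + C 240 * X ^ 3
    - C 48 * X ^ 2 - C 384 * X - C 192

theorem stmt_11 (K L : ℝ → ℝ)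
    (hK : ∀ p : ℝ, K p = 4 * p + p ^ 2 + p * (p - 2) + (1 / 2) * p ^ 2 * (p - 2))
    (hL : ∀ p : ℝ, L p = (1 / 2) * p * (p - 2) - p - 4) :
    ¬ ∃ I : Set ℝ, IsOpen I ∧ I.Nonempty ∧ I.OrdConnected ∧
      (∀ p ∈ I, L p ≠ 0) ∧
      ∀ p ∈ I, (deriv (fun x => K x / L x) p) ^ 2 = 1 := by
  rintro ⟨I, hIopen, ⟨p0, hp0⟩, -, hLne, hder⟩
  -- rewrite the function
  have hfun : (fun x => K x / L x)
      = fun x : ℝ => ((1/2) * x ^ 3 + x ^ 2 + 2 * x) / ((1/2) * x ^ 2 - 2 * x - 4) := by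
    funext x
    rw [hK x, hL x]
    rw [show 4 * x + x ^ 2 + x * (x - 2) + 1 / 2 * x ^ 2 * (x - 2)
        = (1/2) * x ^ 3 + x ^ 2 + 2 * x by ring,
      show 1 / 2 * x * (x - 2) - x - 4 = (1/2) * x ^ 2 - 2 * x - 4 by ring]
  -- every point of I is a root of qpoly
  have hroot : ∀ p ∈ I, qpoly.IsRoot p := by
    intro p hp
    have hDne : (1/2) * p ^ 2 - 2 * p - 4 ≠ 0 := by
      have := hLne p hp
      rw [hL p] at this
      intro h; apply this; linarith
    have h1 : HasDerivAt (fun x : ℝ => (1/2) * x ^ 3 + x ^ 2 + 2 * x)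
        ((3/2) * p ^ 2 + 2 * p + 2) p := by
      have h := (((hasDerivAt_pow 3 p).const_mul ((1:ℝ)/2)).add
        (hasDerivAt_pow 2 p)).add ((hasDerivAt_id' p).const_mul (2:ℝ))
      refine h.congr_deriv ?_
      push_cast; ring
    have h2 : HasDerivAt (fun x : ℝ => (1/2) * x ^ 2 - 2 * x - 4) (p - 2) p := by
      have h := (((hasDerivAt_pow 2 p).const_mul ((1:ℝ)/2)).sub
        ((hasDerivAt_id' p).const_mul (2:ℝ))).sub (hasDerivAt_const p (4:ℝ))
      refine h.congr_deriv ?_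
      push_cast; ring
    have hdiv : HasDerivAt (fun x : ℝ => ((1/2) * x ^ 3 + x ^ 2 + 2 * x) / ((1/2) * x ^ 2 - 2 * x - 4)) _ p := h1.div h2 hDne
    have hd := hder p hp
    rw [hfun, hdiv.deriv] at hd
    have hd2 : (((3/2) * p ^ 2 + 2 * p + 2) * ((1/2) * p ^ 2 - 2 * p - 4)
        - ((1/2) * p ^ 3 + p ^ 2 + 2 * p) * (p - 2)) ^ 2
        = (((1/2) * p ^ 2 - 2 * p - 4) ^ 2) ^ 2 := by
      rw [div_pow, div_eq_one_iff_eq (by positivity)] at hd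
      linear_combination hd
    show qpoly.eval p = 0
    simp only [qpoly, eval_add, eval_sub, eval_mul, eval_neg, eval_pow, eval_C, eval_X]
    linear_combination hd2
  -- the ball around p0 gives infinitely many roots
  obtain ⟨ε, hε, hball⟩ := Metric.isOpen_iff.1 hIopen p0 hp0
  have hinf : {x : ℝ | qpoly.IsRoot x}.Infinite := by
    have hsub : Metric.ball p0 ε ⊆ {x : ℝ | qpoly.IsRoot x} :=
      fun x hx => hroot x (hball hx)
    rw [Real.ball_eq_Ioo] at hsub
    exact (Set.Ioo_infinite (by linarith)).mono hsub
  have h0 := Polynomial.eq_zero_of_infinite_isRoot qpoly hinf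
  have : qpoly.eval 0 = 0 := by rw [h0]; simp
  simp [qpoly] at this
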